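/- Let F be a free filter on ℕ and let κ be a cardinal with ω ≤ κ ≤ 𝔠 (the cardinality of the continuum). Then C_p(X_{F,κ}) is separable. -/

import Mathlib

open Filter Topology Set

/-- The space `X_{F,κ} = (κ × ℕ) ∪ {∞}`: every point of `κ × ℕ` is isolated and the
neighborhoods of `∞ = none` are the sets `{∞} ∪ ⋃_{α} {α} × A_α` with every `A_α ∈ F`. -/
def XFtop (F : Filter ℕ) (ι : Type*) : TopologicalSpace (Option (ι × ℕ)) where
  IsOpen U := none ∈ U → ∀ α : ι, {n | some (α, n) ∈ U} ∈ F
  isOpen_univ := fun _ _ => Filter.univ_mem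
  isOpen_inter := fun U V hU hV hmem α => Filter.inter_mem (hU hmem.1 α) (hV hmem.2 α)
  isOpen_sUnion := fun S hS hmem α => by
    obtain ⟨U, hUS, hU⟩ := hmem
    exact Filter.mem_of_superset (hS U hUS hU α) fun n hn => ⟨U, hUS, hn⟩

/-- `C_p(X)`: continuous real-valued functions on `X` with the topology of pointwise
convergence (subspace of the product `ℝ^X`). -/
abbrev Cp (X : Type*) [TopologicalSpace X] : Type _ := {f : X → ℝ // Continuous f}

/-- Lookup with default `0` in an association list. -/
def lookupD : List ((List Bool × ℕ) × ℚ) → List Bool × ℕ → ℚ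
  | [], _ => 0
  | kv :: t, k => if kv.1 = k then kv.2 else lookupD t k

lemma lookupD_eq (L : List ((List Bool × ℕ) × ℚ)) (k : List Bool × ℕ) (v : ℚ)
    (hmem : (k, v) ∈ L) (huniq : ∀ v', (k, v') ∈ L → v' = v) : lookupD L k = v := by
  induction L with
  | nil => simp at hmem
  | cons a t ih =>
    by_cases h : a.1 = k
    · have : a = (k, a.2) := by rw [← h]
      rw [lookupD, if_pos h]
      exact huniq a.2 (by rw [← this]; exact List.mem_cons_self)
    · rw [lookupD, if_neg h]
      apply ih
      · rcases List.mem_cons.mp hmem with h1 | h1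
        · exact absurd (congrArg Prod.fst h1.symm) h
        · exact h1
      · exact fun v' hv' => huniq v' (List.mem_cons_of_mem _ hv')

/-- The first `M` values of a boolean sequence, as a list. -/
def key (e : ℕ → Bool) (M : ℕ) : List Bool := (List.range M).map e

lemma key_inj_of_lt {e₁ e₂ : ℕ → Bool} {M : ℕ} (h : key e₁ M = key e₂ M)
    {m : ℕ} (hm : m < M) : e₁ m = e₂ m :=
  List.map_inj_left.mp h m (List.mem_range.mpr hm)

lemma exists_M {ι : Type} (e : ι → ℕ → Bool) (he : Function.Injective e) (A : Finset ι) :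
    ∃ M, ∀ α ∈ A, ∀ β ∈ A, key (e α) M = key (e β) M → α = β := by
  classical
  have hD : ∀ α β : ι, α ≠ β → ∃ m, e α m ≠ e β m := fun α β h =>
    Function.ne_iff.mp (fun heq => h (he heq))
  set D : ι → ι → ℕ := fun α β =>
    if h : α ≠ β then Classical.choose (hD α β h) else 0 with hDdef
  have hDspec : ∀ α β, α ≠ β → e α (D α β) ≠ e β (D α β) := by
    intro α β h
    simp only [hDdef, dif_pos h]
    exact Classical.choose_spec (hD α β h)
  refine ⟨(A ×ˢ A).sup (fun p => D p.1 p.2) + 1, fun α hα β hβ hkey => ?_⟩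
  by_contra hne
  have hle : D α β ≤ (A ×ˢ A).sup (fun p => D p.1 p.2) :=
    Finset.le_sup (f := fun p => D p.1 p.2) (b := (α, β)) (Finset.mem_product.mpr ⟨hα, hβ⟩)
  exact hDspec α β hne (key_inj_of_lt hkey (Nat.lt_succ_of_le hle))

/-- Countable parameter type for the dense family: a rational value at `∞`, a threshold `N`,
a truncation length `M`, and an association list of finitely many corrections. -/
abbrev Param : Type := ℚ × ℕ × ℕ × List ((List Bool × ℕ) × ℚ)

/-- The eventually-constant function coded by a parameter `p = (c, N, M, L)`. -/
def Phi {ι : Type} (e : ι → ℕ → Bool) (p : Param) : Option (ι × ℕ) → ℝ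
  | none => (p.1 : ℝ)
  | some (α, n) =>
      if n < p.2.1 then ((p.1 + lookupD p.2.2.2 (key (e α) p.2.2.1, n) : ℚ) : ℝ)
      else (p.1 : ℝ)

lemma continuous_XF_aux (F : Filter ℕ) (ι : Type) (hfree : F ≤ Filter.cofinite)
    (f : Option (ι × ℕ) → ℝ) (N : ℕ)
    (hf : ∀ α n, N ≤ n → f (some (α, n)) = f none) :
    @Continuous _ _ (XFtop F ι) _ f := by
  letI := XFtop F ι
  rw [continuous_def]
  intro U hU
  show none ∈ f ⁻¹' U → ∀ α, {n | some (α, n) ∈ f ⁻¹' U} ∈ F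
  intro hmem α
  have h1 : {n : ℕ | N ≤ n} ∈ F := by
    apply hfree
    rw [Filter.mem_cofinite]
    have : {n : ℕ | N ≤ n}ᶜ = {n | n < N} := by ext n; simp
    rw [this]; exact Set.finite_lt_nat N
  exact Filter.mem_of_superset h1 fun n hn => by
    show f (some (α, n)) ∈ U
    rw [hf α n hn]; exact hmem

lemma continuous_Phi (F : Filter ℕ) (ι : Type) (hfree : F ≤ Filter.cofinite)
    (e : ι → ℕ → Bool) (p : Param) : @Continuous _ _ (XFtop F ι) _ (Phi e p) := by
  apply continuous_XF_aux F ι hfree _ p.2.1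
  intro α n hn
  show (if n < p.2.1 then _ else ((p.1 : ℚ) : ℝ)) = ((p.1 : ℚ) : ℝ)
  rw [if_neg (by omega)]

lemma approx {ι : Type} (e : ι → ℕ → Bool) (he : Function.Injective e)
    (f : Option (ι × ℕ) → ℝ) (I : Finset (Option (ι × ℕ))) {ε : ℝ} (hε : 0 < ε) :
    ∃ p : Param, ∀ x ∈ I, |Phi e p x - f x| < ε := by
  classical
  set J : Finset (ι × ℕ) := I.preimage some (Set.injOn_of_injective (Option.some_injective _))
    with hJdef
  have hJ : ∀ x : ι × ℕ, x ∈ J ↔ some x ∈ I := fun x => Finset.mem_preimage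
  set A : Finset ι := J.image Prod.fst with hAdef
  obtain ⟨M, hM⟩ := exists_M e he A
  set N : ℕ := (J.image Prod.snd).sup id + 1 with hNdef
  set c : ℚ := Classical.choose (exists_rat_near (f none) hε) with hcdef
  have hc : |f none - (c : ℝ)| < ε := Classical.choose_spec (exists_rat_near (f none) hε)
  set q : ι × ℕ → ℚ := fun x => Classical.choose (exists_rat_near (f (some x)) hε) with hqdef
  have hq : ∀ x, |f (some x) - (q x : ℝ)| < ε :=
    fun x => Classical.choose_spec (exists_rat_near (f (some x)) hε)
  set L : List ((List Bool × ℕ) × ℚ) :=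
    J.toList.map (fun x => ((key (e x.1) M, x.2), q x - c)) with hLdef
  refine ⟨(c, N, M, L), ?_⟩
  rintro (_ | ⟨α, n⟩) hx
  · show |(c : ℝ) - f none| < ε
    rw [abs_sub_comm]; exact hc
  · have hxJ : (α, n) ∈ J := (hJ (α, n)).mpr hx
    have hn : n < N := by
      have : n ≤ (J.image Prod.snd).sup id :=
        Finset.le_sup (f := id) (Finset.mem_image.mpr ⟨(α, n), hxJ, rfl⟩)
      omega
    have hlook : lookupD L (key (e α) M, n) = q (α, n) - c := by
      apply lookupD_eq
      · exact List.mem_map.mpr ⟨(α, n), Finset.mem_toList.mpr hxJ, rfl⟩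
      · intro v' hv'
        obtain ⟨x', hx', hx'eq⟩ := List.mem_map.mp hv'
        have hkeys : key (e x'.1) M = key (e α) M := congrArg (Prod.fst ∘ Prod.fst) hx'eq
        have hn' : x'.2 = n := congrArg (Prod.snd ∘ Prod.fst) hx'eq
        have hx'J : x' ∈ J := Finset.mem_toList.mp hx'
        have hα : x'.1 = α := hM x'.1 (Finset.mem_image.mpr ⟨x', hx'J, rfl⟩)
          α (Finset.mem_image.mpr ⟨(α, n), hxJ, rfl⟩) hkeys
        have : x' = (α, n) := Prod.ext hα hn'
        rw [← this]
        exact (congrArg Prod.snd hx'eq).symm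
    show |Phi e (c, N, M, L) (some (α, n)) - f (some (α, n))| < ε
    have : Phi e (c, N, M, L) (some (α, n)) = ((q (α, n) : ℚ) : ℝ) := by
      show (if n < N then ((c + lookupD L (key (e α) M, n) : ℚ) : ℝ) else (c : ℝ)) = _
      rw [if_pos hn, hlook]
      push_cast
      ring
    rw [this, abs_sub_comm]
    exact hq (α, n)

/-- For a free filter `F` on `ℕ` and an index set `ι` of infinite cardinality at most the
continuum, the space `C_p(X_{F,ι})` is separable. -/
theorem separable_Cp_XF (F : Filter ℕ) (hproper : F.NeBot) (hfree : F ≤ Filter.cofinite)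
    (ι : Type) (h1 : Cardinal.aleph0 ≤ Cardinal.mk ι)
    (h2 : Cardinal.mk ι ≤ Cardinal.continuum) :
    letI := XFtop F ι
    TopologicalSpace.SeparableSpace (Cp (Option (ι × ℕ))) := by
  letI := XFtop F ι
  classical
  -- get an injection of `ι` into the Cantor set `ℕ → Bool`
  obtain ⟨e, he⟩ : ∃ e : ι → ℕ → Bool, Function.Injective e := by
    have hset : Cardinal.mk ι ≤ Cardinal.mk (Set ℕ) := by
      rwa [Cardinal.mk_set, Cardinal.mk_nat, Cardinal.two_power_aleph0]
    obtain ⟨emb⟩ := Cardinal.le_def _ _ |>.mp hset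
    refine ⟨fun α n => @decide (n ∈ emb α) (Classical.propDecidable _), fun α β h => ?_⟩
    apply emb.injective
    ext n
    exact decide_eq_decide.mp (congrFun h n)
  refine ⟨⟨Set.range (fun p : Param => (⟨Phi e p, continuous_Phi F ι hfree e p⟩ :
      Cp (Option (ι × ℕ)))), Set.countable_range _, ?_⟩⟩
  intro f
  rw [mem_closure_iff_nhds]
  intro U hU
  rw [nhds_induced, Filter.mem_comap] at hU
  obtain ⟨V, hV, hVU⟩ := hU
  rw [nhds_pi, Filter.mem_pi] at hV
  obtain ⟨I, hIfin, t, ht, hsub⟩ := hV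
  have hball : ∀ x, ∃ ε > 0, Metric.ball (f.1 x) ε ⊆ t x := fun x =>
    Metric.mem_nhds_iff.mp (ht x)
  choose εx hεx hballx using hball
  set If : Finset (Option (ι × ℕ)) := hIfin.toFinset with hIfdef
  set ε : ℝ := if h : If.Nonempty then If.inf' h εx else 1 with hεdef
  have hε : 0 < ε := by
    rw [hεdef]
    split
    · exact (Finset.lt_inf'_iff _).mpr fun x _ => hεx x
    · norm_num
  have hεle : ∀ x ∈ If, ε ≤ εx x := by
    intro x hx
    rw [hεdef, dif_pos ⟨x, hx⟩]
    exact Finset.inf'_le _ hx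
  obtain ⟨p, hp⟩ := approx e he f.1 If hε
  refine ⟨⟨Phi e p, continuous_Phi F ι hfree e p⟩, hVU ?_, Set.mem_range_self p⟩
  show Phi e p ∈ V
  apply hsub
  intro x hx
  have hxIf : x ∈ If := hIfin.mem_toFinset.mpr hx
  apply hballx x
  rw [Metric.mem_ball, Real.dist_eq]
  exact lt_of_lt_of_le (hp x hxIf) (hεle x hxIf)
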